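/- Let (V,g) be Lorentzian of dimension 2m+2, let κ be a nonzero null 1-form with associated null vector k = g⁻¹(κ), and let ω be a 2-form with k⌟ω = 0 and such that ω induces a Hermitian structure on the screen space of K = span(k) (i.e. the induced endomorphism squares to −Id). Then the 3-form ρ = 3 κ ∧ ω (i.e. ρ_{abc} = 3κ_{[a}ω_{bc]}) satisfies ρ_{ab}{}^e ρ_{cde} = −4 κ_{[a} g_{b][c} κ_{d]}. -/

import Mathlib

/-- The Robinson 3-form `ρ_{abc} = 3 κ_{[a} ω_{bc]}` associated to the optical
1-form `κ = g(k,·)` and the 2-form `ω`. -/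
def Rob3 {V : Type*} [AddCommGroup V] [Module ℝ V]
    (g ω : V →ₗ[ℝ] V →ₗ[ℝ] ℝ) (k : V) (x y z : V) : ℝ :=
  g k x * ω y z - g k y * ω x z + g k z * ω x y

/-- Let `(V,g)` be Lorentzian of dimension `2m+2`, `κ = g(k,·)` a
nonzero null 1-form, and `ω` a 2-form with `k ⌟ ω = 0` inducing a Hermitian
structure on the screen space of `K = span(k)`; the Hermitian condition is
encoded by the splitting vector `ℓ` and the identity
`ω_a{}^e ω_{eb} = −(g_{ab} − κ_a λ_b − λ_a κ_b)`.  Then the 3-form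
`ρ = 3 κ_{[a} ω_{bc]}` satisfies
`ρ_{ab}{}^e ρ_{cde} = −4 κ_{[a} g_{b][c} κ_{d]}`. -/
theorem robinson_three_form_squared (m : ℕ) (V : Type*) [AddCommGroup V] [Module ℝ V]
    [FiniteDimensional ℝ V]
    (g : V →ₗ[ℝ] V →ₗ[ℝ] ℝ)
    (e : Module.Basis (Fin (2 * m + 2)) ℝ V)
    (hGe : ∀ i j, g (e i) (e j) =
      if i = j then (if (i : ℕ) = 2 * m + 1 then (-1 : ℝ) else 1) else 0)
    (k : V) (hk : k ≠ 0) (hkk : g k k = 0)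
    (l : V) (hkl : g k l = 1) (hll : g l l = 0)
    (ω : V →ₗ[ℝ] V →ₗ[ℝ] ℝ)
    (hωalt : ∀ v w, ω v w = - ω w v)
    (hωk : ∀ v, ω k v = 0) (hωl : ∀ v, ω l v = 0)
    (hHerm : ∀ v w u, (∀ x, g u x = ω v x) →
      ω u w = -(g v w - g k v * g l w - g l v * g k w)) :
    ∀ a b c d w, (∀ x, g w x = Rob3 g ω k a b x) →
      Rob3 g ω k c d w =
        -(g k a * g b c * g k d - g k b * g a c * g k d
          - g k a * g b d * g k c + g k b * g a d * g k c) := by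
  -- g is symmetric
  have hsymm : ∀ v u, g v u = g u v := by
    have h : g = g.flip := by
      refine e.ext fun i => e.ext fun j => ?_
      simp only [LinearMap.flip_apply, hGe]
      rcases eq_or_ne i j with h | h
      · subst h; rfl
      · simp [h, h.symm]
    intro v u
    conv_lhs => rw [h]
    rfl
  intro a b c d w hw
  have hωbk : ∀ v : V, ω v k = 0 := fun v => by rw [hωalt]; simp [hωk]
  have hwk : g k w = 0 := by
    rw [hsymm k w, hw k, Rob3, hkk, hωbk, hωbk]; ring
  set v0 : V := g k a • b - g k b • a with hv0
  have hu : ∀ x, g (w - ω a b • k) x = ω v0 x := by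
    intro x
    simp only [map_sub, map_smul, LinearMap.sub_apply, LinearMap.smul_apply,
      smul_eq_mul, hw x, Rob3, hv0]
    ring
  have hkv0 : g k v0 = 0 := by
    simp only [hv0, map_sub, map_smul, smul_eq_mul]; ring
  have hωwc : ∀ x : V, ω w x =
      -(g v0 x - g l v0 * g k x) := by
    intro x
    have h := hHerm v0 x (w - ω a b • k) hu
    have h2 : ω (w - ω a b • k) x = ω w x := by
      simp [map_sub, hωk]
    rw [h2, hkv0] at h
    rw [h]; ring
  have hgv0 : ∀ x : V, g v0 x = g k a * g b x - g k b * g a x := by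
    intro x
    simp only [hv0, map_sub, map_smul, LinearMap.sub_apply, LinearMap.smul_apply,
      smul_eq_mul]
  have hωc : ω c w = g k a * g b c - g k b * g a c - g l v0 * g k c := by
    rw [hωalt c w, hωwc c, hgv0 c]; ring
  have hωd : ω d w = g k a * g b d - g k b * g a d - g l v0 * g k d := by
    rw [hωalt d w, hωwc d, hgv0 d]; ring
  rw [Rob3, hωc, hωd, hwk]
  ring
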